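/- For r = n/(2n+1) with n ≥ 2, in the group G = ⟨a, b | u_r⟩ the element u_s with s = (n+1)/(2n+1) commutes with the meridian generator b; i.e., b u_s b^{-1} = u_s in G. -/
import Mathlib


/-- The exponent-letter word `u_{q/p} = a^{ε₁} b^{ε₂} ⋯ a^{ε_{2p-1}} b^{ε_{2p}}`,
encoded as a list of letters `(generator, sign)` with `true = a`, `false = b`,
and sign `true` meaning exponent `+1`.  Here (0-indexed) `ε_{j+1} = (-1)^⌊jq/p⌋`. -/
def epsWord (p q : ℕ) : List (Bool × Bool) :=
  (List.range (2 * p)).map fun j => (decide (j % 2 = 0), decide ((j * q / p) % 2 = 0))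

/-- The S-sequence of slope `q/p`: run lengths of the sign pattern `⌊jq/p⌋ mod 2`. -/
def signRuns (p q : ℕ) : List ℕ :=
  (((List.range (2 * p)).map fun j => (j * q / p) % 2).splitBy (· == ·)).map List.length

/-- The S-sequence of a rational number. -/
def SseqQ (r : ℚ) : List ℕ := signRuns r.den r.num.toNat

/-- Continued fraction `[m₁, m₂, …, m_k] = 1/(m₁ + 1/(m₂ + ⋯ + 1/m_k))`. -/
def contFrac : List ℕ → ℚ
  | [] => 0
  | m :: l => 1 / (m + contFrac l)

/-- The word `u_{q/p}` as an element of the free group `F(a,b)`, `a = of true`,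
`b = of false`. -/
def uElt (p q : ℕ) : FreeGroup Bool := FreeGroup.mk (epsWord p q)



namespace US17

def ga : FreeGroup Bool := FreeGroup.of true
def gb : FreeGroup Bool := FreeGroup.of false
def gc : FreeGroup Bool := ga * gb * ga⁻¹ * gb⁻¹
def gd : FreeGroup Bool := ga⁻¹ * gb * ga * gb⁻¹
def bbw (n : ℕ) : FreeGroup Bool := if n % 2 = 0 then gb else gb⁻¹

def fR (n : ℕ) (j : ℕ) : Bool × Bool :=
  (decide (j % 2 = 0), decide ((j * n / (2 * n + 1)) % 2 = 0))

def fS (n : ℕ) (j : ℕ) : Bool × Bool :=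
  (decide (j % 2 = 0), decide ((j * (n + 1) / (2 * n + 1)) % 2 = 0))

lemma epsR (n : ℕ) : epsWord (2*n+1) n = (List.range (2*(2*n+1))).map (fR n) := rfl
lemma epsS (n : ℕ) : epsWord (2*n+1) (n+1) = (List.range (2*(2*n+1))).map (fS n) := rfl

-- division lemmas
lemma divr_even (n k : ℕ) (h : k + 1 ≤ 2*n) : 2*(k+1)*n/(2*n+1) = k :=
  Nat.div_eq_of_lt_le (by nlinarith) (by nlinarith)

lemma divr_odd_lo (n i : ℕ) (h : i ≤ n) : (2*i+1)*n/(2*n+1) = i :=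
  Nat.div_eq_of_lt_le (by nlinarith) (by nlinarith)

lemma divr_odd_hi (n k : ℕ) (h1 : n ≤ k) (h2 : k+1 ≤ 2*n) : (2*(k+1)+1)*n/(2*n+1) = k :=
  Nat.div_eq_of_lt_le (by nlinarith) (by nlinarith)

lemma divs_even (n i : ℕ) (h : i ≤ 2*n) : 2*i*(n+1)/(2*n+1) = i :=
  Nat.div_eq_of_lt_le (by nlinarith) (by nlinarith)

lemma divs_odd_lo (n i : ℕ) (h : i+1 ≤ n) : (2*i+1)*(n+1)/(2*n+1) = i :=
  Nat.div_eq_of_lt_le (by nlinarith) (by nlinarith)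

lemma divs_odd_hi (n i : ℕ) (h1 : n ≤ i) (h2 : i ≤ 2*n) : (2*i+1)*(n+1)/(2*n+1) = i+1 :=
  Nat.div_eq_of_lt_le (by nlinarith) (by nlinarith)

-- mk helpers
lemma mk_T (x : Bool) : FreeGroup.mk [(x, true)] = FreeGroup.of x := rfl

lemma mk_F (x : Bool) : FreeGroup.mk [(x, false)] = (FreeGroup.of x)⁻¹ := by
  rw [← mk_T x, FreeGroup.inv_mk]; rfl

lemma mk_cons4 (p q r s : Bool × Bool) :
    FreeGroup.mk [p,q,r,s] = FreeGroup.mk [p] * FreeGroup.mk [q] * FreeGroup.mk [r] * FreeGroup.mk [s] := by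
  simp [FreeGroup.mul_mk]

lemma gcinv_word : FreeGroup.mk [(false,true),(true,true),(false,false),(true,false)] = gc⁻¹ := by
  rw [mk_cons4, mk_T, mk_T, mk_F, mk_F]
  unfold gc ga gb; group

lemma gc_word : FreeGroup.mk [(true,true),(false,true),(true,false),(false,false)] = gc := by
  rw [mk_cons4, mk_T, mk_T, mk_F, mk_F]
  unfold gc ga gb; group

lemma gd_word : FreeGroup.mk [(true,false),(false,true),(true,true),(false,false)] = gd := by
  rw [mk_cons4, mk_F, mk_T, mk_T, mk_F]
  unfold gd ga gb; group

lemma mk_range_step (f : ℕ → Bool × Bool) (m : ℕ) :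
    FreeGroup.mk ((List.range (m+4)).map f)
      = FreeGroup.mk ((List.range m).map f) * FreeGroup.mk [f m, f (m+1), f (m+2), f (m+3)] := by
  rw [List.range_add, List.map_append, ← FreeGroup.mul_mk]
  congr 1

end US17

namespace US17

lemma chunkR1 (n : ℕ) : ∀ k, 2*k ≤ n+1 →
    FreeGroup.mk ((List.range (4*k+1)).map (fR n)) = ga * (gc⁻¹)^k := by
  intro k
  induction k with
  | zero =>
    intro _
    have h0 : fR n 0 = (true, true) := by
      simp only [fR, Nat.zero_mul, Nat.zero_div, Nat.zero_mod]
      rfl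
    rw [show (4*0+1) = 1 from rfl, show List.range 1 = [0] from rfl]
    simp only [List.map_cons, List.map_nil, h0, pow_zero, mul_one, mk_T, ga]
  | succ k ih =>
    intro h
    rw [show 4*(k+1)+1 = (4*k+1)+4 from by omega, mk_range_step, ih (by omega)]
    have hd1 : (4*k+1)*n/(2*n+1) = 2*k := by
      rw [show 4*k+1 = 2*(2*k)+1 from by omega]
      exact divr_odd_lo n (2*k) (by omega)
    have hd2 : (4*k+1+1)*n/(2*n+1) = 2*k := by
      rw [show 4*k+1+1 = 2*(2*k+1) from by omega]
      exact divr_even n (2*k) (by omega)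
    have hd3 : (4*k+1+2)*n/(2*n+1) = 2*k+1 := by
      rw [show 4*k+1+2 = 2*(2*k+1)+1 from by omega]
      exact divr_odd_lo n (2*k+1) (by omega)
    have hd4 : (4*k+1+3)*n/(2*n+1) = 2*k+1 := by
      rw [show 4*k+1+3 = 2*((2*k+1)+1) from by omega]
      exact divr_even n (2*k+1) (by omega)
    have e1 : fR n (4*k+1) = (false, true) := by
      simp only [fR, hd1, Prod.mk.injEq, decide_eq_true_eq, decide_eq_false_iff_not]
      omega
    have e2 : fR n (4*k+1+1) = (true, true) := by
      simp only [fR, hd2, Prod.mk.injEq, decide_eq_true_eq, decide_eq_false_iff_not]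
      omega
    have e3 : fR n (4*k+1+2) = (false, false) := by
      simp only [fR, hd3, Prod.mk.injEq, decide_eq_true_eq, decide_eq_false_iff_not]
      omega
    have e4 : fR n (4*k+1+3) = (true, false) := by
      simp only [fR, hd4, Prod.mk.injEq, decide_eq_true_eq, decide_eq_false_iff_not]
      omega
    rw [e1, e2, e3, e4, gcinv_word, pow_succ, mul_assoc]

end US17

namespace US17

lemma chunkR2 (n : ℕ) (hn : 2 ≤ n) : ∀ k, k ≤ n/2 →
    FreeGroup.mk ((List.range (4*k)).map (fun j => fR n (4*((n+1)/2)+2+j))) = gc^k := by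
  intro k
  induction k with
  | zero => intro _; rw [pow_zero]; rfl
  | succ k ih =>
    intro h
    rw [show 4*(k+1) = (4*k)+4 from by omega, mk_range_step, ih (by omega)]
    beta_reduce
    have hd1 : (4*((n+1)/2)+2+(4*k))*n/(2*n+1) = 2*((n+1)/2)+2*k := by
      rw [show 4*((n+1)/2)+2+(4*k) = 2*((2*((n+1)/2)+2*k)+1) from by omega]
      exact divr_even n (2*((n+1)/2)+2*k) (by omega)
    have hd2 : (4*((n+1)/2)+2+(4*k+1))*n/(2*n+1) = 2*((n+1)/2)+2*k := by
      rw [show 4*((n+1)/2)+2+(4*k+1) = 2*((2*((n+1)/2)+2*k)+1)+1 from by omega]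
      exact divr_odd_hi n (2*((n+1)/2)+2*k) (by omega) (by omega)
    have hd3 : (4*((n+1)/2)+2+(4*k+2))*n/(2*n+1) = 2*((n+1)/2)+2*k+1 := by
      rw [show 4*((n+1)/2)+2+(4*k+2) = 2*((2*((n+1)/2)+2*k+1)+1) from by omega]
      exact divr_even n (2*((n+1)/2)+2*k+1) (by omega)
    have hd4 : (4*((n+1)/2)+2+(4*k+3))*n/(2*n+1) = 2*((n+1)/2)+2*k+1 := by
      rw [show 4*((n+1)/2)+2+(4*k+3) = 2*((2*((n+1)/2)+2*k+1)+1)+1 from by omega]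
      exact divr_odd_hi n (2*((n+1)/2)+2*k+1) (by omega) (by omega)
    have e1 : fR n (4*((n+1)/2)+2+(4*k)) = (true, true) := by
      simp only [fR, hd1, Prod.mk.injEq, decide_eq_true_eq, decide_eq_false_iff_not]
      omega
    have e2 : fR n (4*((n+1)/2)+2+(4*k+1)) = (false, true) := by
      simp only [fR, hd2, Prod.mk.injEq, decide_eq_true_eq, decide_eq_false_iff_not]
      omega
    have e3 : fR n (4*((n+1)/2)+2+(4*k+2)) = (true, false) := by
      simp only [fR, hd3, Prod.mk.injEq, decide_eq_true_eq, decide_eq_false_iff_not]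
      omega
    have e4 : fR n (4*((n+1)/2)+2+(4*k+3)) = (false, false) := by
      simp only [fR, hd4, Prod.mk.injEq, decide_eq_true_eq, decide_eq_false_iff_not]
      omega
    rw [e1, e2, e3, e4, gc_word, pow_succ]

end US17

namespace US17

lemma midR (n : ℕ) (hn : 2 ≤ n) :
    FreeGroup.mk [fR n (4*((n+1)/2)+1)] = bbw n := by
  have hd : (4*((n+1)/2)+1)*n/(2*n+1) = n := by
    rcases Nat.even_or_odd n with ⟨m, hm⟩ | ⟨m, hm⟩
    · rw [show 4*((n+1)/2)+1 = 2*n+1 from by omega]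
      exact divr_odd_lo n n le_rfl
    · rw [show 4*((n+1)/2)+1 = 2*(n+1)+1 from by omega]
      exact divr_odd_hi n n le_rfl (by omega)
  by_cases hp : n % 2 = 0
  · have e : fR n (4*((n+1)/2)+1) = (false, true) := by
      simp only [fR, hd, Prod.mk.injEq, decide_eq_true_eq, decide_eq_false_iff_not]
      omega
    rw [e, bbw, if_pos hp, mk_T]; rfl
  · have e : fR n (4*((n+1)/2)+1) = (false, false) := by
      simp only [fR, hd, Prod.mk.injEq, decide_eq_true_eq, decide_eq_false_iff_not]
      omega
    rw [e, bbw, if_neg hp, mk_F]; rfl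

lemma ur_closed (n : ℕ) (hn : 2 ≤ n) :
    uElt (2*n+1) n = ga * (gc⁻¹)^((n+1)/2) * bbw n * gc^(n/2) := by
  have h1 : uElt (2*n+1) n = FreeGroup.mk ((List.range (2*(2*n+1))).map (fR n)) := rfl
  rw [h1, show 2*(2*n+1) = (4*((n+1)/2)+1) + (1 + 4*(n/2)) from by omega,
      List.range_add, List.map_append, ← FreeGroup.mul_mk, chunkR1 n ((n+1)/2) (by omega),
      List.map_map]
  rw [List.range_add, List.map_append, ← FreeGroup.mul_mk]
  have hmid : ((List.range 1).map (fR n ∘ fun x => 4*((n+1)/2)+1+x)) = [fR n (4*((n+1)/2)+1)] := rfl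
  rw [hmid, midR n hn, List.map_map]
  have hfun : (fR n ∘ (fun x => 4*((n+1)/2)+1+x)) ∘ (fun x => 1+x)
      = (fun j => fR n (4*((n+1)/2)+2+j)) := by
    funext x
    show fR n (4*((n+1)/2)+1+(1+x)) = fR n (4*((n+1)/2)+2+x)
    congr 1
    omega
  rw [hfun, chunkR2 n hn (n/2) le_rfl, ← mul_assoc]

end US17

namespace US17

lemma chunkS1 (n : ℕ) : ∀ k, 2*k ≤ n →
    FreeGroup.mk ((List.range (4*k)).map (fS n)) = gc^k := by
  intro k
  induction k with
  | zero => intro _; rw [pow_zero]; rfl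
  | succ k ih =>
    intro h
    rw [show 4*(k+1) = (4*k)+4 from by omega, mk_range_step, ih (by omega)]
    have hd1 : (4*k)*(n+1)/(2*n+1) = 2*k := by
      rw [show 4*k = 2*(2*k) from by omega]
      exact divs_even n (2*k) (by omega)
    have hd2 : (4*k+1)*(n+1)/(2*n+1) = 2*k := by
      rw [show 4*k+1 = 2*(2*k)+1 from by omega]
      exact divs_odd_lo n (2*k) (by omega)
    have hd3 : (4*k+2)*(n+1)/(2*n+1) = 2*k+1 := by
      rw [show 4*k+2 = 2*(2*k+1) from by omega]
      exact divs_even n (2*k+1) (by omega)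
    have hd4 : (4*k+3)*(n+1)/(2*n+1) = 2*k+1 := by
      rw [show 4*k+3 = 2*(2*k+1)+1 from by omega]
      exact divs_odd_lo n (2*k+1) (by omega)
    have e1 : fS n (4*k) = (true, true) := by
      simp only [fS, hd1, Prod.mk.injEq, decide_eq_true_eq, decide_eq_false_iff_not]
      omega
    have e2 : fS n (4*k+1) = (false, true) := by
      simp only [fS, hd2, Prod.mk.injEq, decide_eq_true_eq, decide_eq_false_iff_not]
      omega
    have e3 : fS n (4*k+2) = (true, false) := by
      simp only [fS, hd3, Prod.mk.injEq, decide_eq_true_eq, decide_eq_false_iff_not]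
      omega
    have e4 : fS n (4*k+3) = (false, false) := by
      simp only [fS, hd4, Prod.mk.injEq, decide_eq_true_eq, decide_eq_false_iff_not]
      omega
    rw [e1, e2, e3, e4, gc_word, pow_succ]

lemma chunkS3 (n : ℕ) : ∀ k, k ≤ (n+1)/2 →
    FreeGroup.mk ((List.range (4*k)).map (fun j => fS n (4*(n/2)+2+j))) = gd^k := by
  intro k
  induction k with
  | zero => intro _; rw [pow_zero]; rfl
  | succ k ih =>
    intro h
    rw [show 4*(k+1) = (4*k)+4 from by omega, mk_range_step, ih (by omega)]
    have hd1 : (4*(n/2)+2+(4*k))*(n+1)/(2*n+1) = 2*(n/2)+2*k+1 := by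
      rw [show 4*(n/2)+2+(4*k) = 2*(2*(n/2)+2*k+1) from by omega]
      exact divs_even n (2*(n/2)+2*k+1) (by omega)
    have hd2 : (4*(n/2)+2+(4*k+1))*(n+1)/(2*n+1) = 2*(n/2)+2*k+2 := by
      rw [show 4*(n/2)+2+(4*k+1) = 2*(2*(n/2)+2*k+1)+1 from by omega]
      exact divs_odd_hi n (2*(n/2)+2*k+1) (by omega) (by omega)
    have hd3 : (4*(n/2)+2+(4*k+2))*(n+1)/(2*n+1) = 2*(n/2)+2*k+2 := by
      rw [show 4*(n/2)+2+(4*k+2) = 2*(2*(n/2)+2*k+2) from by omega]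
      exact divs_even n (2*(n/2)+2*k+2) (by omega)
    have hd4 : (4*(n/2)+2+(4*k+3))*(n+1)/(2*n+1) = 2*(n/2)+2*k+3 := by
      rw [show 4*(n/2)+2+(4*k+3) = 2*(2*(n/2)+2*k+2)+1 from by omega]
      exact divs_odd_hi n (2*(n/2)+2*k+2) (by omega) (by omega)
    have e1 : fS n (4*(n/2)+2+(4*k)) = (true, false) := by
      simp only [fS, hd1, Prod.mk.injEq, decide_eq_true_eq, decide_eq_false_iff_not]
      omega
    have e2 : fS n (4*(n/2)+2+(4*k+1)) = (false, true) := by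
      simp only [fS, hd2, Prod.mk.injEq, decide_eq_true_eq, decide_eq_false_iff_not]
      omega
    have e3 : fS n (4*(n/2)+2+(4*k+2)) = (true, true) := by
      simp only [fS, hd3, Prod.mk.injEq, decide_eq_true_eq, decide_eq_false_iff_not]
      omega
    have e4 : fS n (4*(n/2)+2+(4*k+3)) = (false, false) := by
      simp only [fS, hd4, Prod.mk.injEq, decide_eq_true_eq, decide_eq_false_iff_not]
      omega
    rw [e1, e2, e3, e4, gd_word, pow_succ]

lemma midS (n : ℕ) (hn : 2 ≤ n) :
    FreeGroup.mk [fS n (4*(n/2)), fS n (4*(n/2)+1)] = ga * (bbw n)⁻¹ := by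
  have e0 : fS n (4*(n/2)) = (true, true) := by
    have hd : (4*(n/2))*(n+1)/(2*n+1) = 2*(n/2) := by
      rw [show 4*(n/2) = 2*(2*(n/2)) from by omega]
      exact divs_even n (2*(n/2)) (by omega)
    simp only [fS, hd, Prod.mk.injEq, decide_eq_true_eq, decide_eq_false_iff_not]
    omega
  have e1 : FreeGroup.mk [fS n (4*(n/2)+1)] = (bbw n)⁻¹ := by
    by_cases hp : n % 2 = 0
    · have hd : (4*(n/2)+1)*(n+1)/(2*n+1) = n+1 := by
        rw [show 4*(n/2)+1 = 2*n+1 from by omega]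
        exact divs_odd_hi n n le_rfl (by omega)
      have e : fS n (4*(n/2)+1) = (false, false) := by
        simp only [fS, hd, Prod.mk.injEq, decide_eq_true_eq, decide_eq_false_iff_not]
        omega
      rw [e, bbw, if_pos hp, mk_F]; rfl
    · have hd : (4*(n/2)+1)*(n+1)/(2*n+1) = n-1 := by
        rw [show 4*(n/2)+1 = 2*(n-1)+1 from by omega]
        exact divs_odd_lo n (n-1) (by omega)
      have e : fS n (4*(n/2)+1) = (false, true) := by
        simp only [fS, hd, Prod.mk.injEq, decide_eq_true_eq, decide_eq_false_iff_not]
        omega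
      rw [e, bbw, if_neg hp, mk_T, inv_inv]; rfl
  rw [show [fS n (4*(n/2)), fS n (4*(n/2)+1)]
      = [fS n (4*(n/2))] ++ [fS n (4*(n/2)+1)] from rfl, ← FreeGroup.mul_mk, e0, e1, mk_T]
  rfl

lemma us_closed (n : ℕ) (hn : 2 ≤ n) :
    uElt (2*n+1) (n+1) = gc^(n/2) * ga * (bbw n)⁻¹ * gd^((n+1)/2) := by
  have h1 : uElt (2*n+1) (n+1) = FreeGroup.mk ((List.range (2*(2*n+1))).map (fS n)) := rfl
  rw [h1, show 2*(2*n+1) = (4*(n/2)) + (2 + 4*((n+1)/2)) from by omega,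
      List.range_add, List.map_append, ← FreeGroup.mul_mk, chunkS1 n (n/2) (by omega),
      List.map_map]
  rw [List.range_add, List.map_append, ← FreeGroup.mul_mk]
  have hmid : ((List.range 2).map (fS n ∘ fun x => 4*(n/2)+x))
      = [fS n (4*(n/2)), fS n (4*(n/2)+1)] := rfl
  rw [hmid, midS n hn, List.map_map]
  have hfun : (fS n ∘ (fun x => 4*(n/2)+x)) ∘ (fun x => 2+x)
      = (fun j => fS n (4*(n/2)+2+j)) := by
    funext x
    show fS n (4*(n/2)+(2+x)) = fS n (4*(n/2)+2+x)
    congr 1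
    omega
  rw [hfun, chunkS3 n ((n+1)/2) le_rfl, ← mul_assoc, ← mul_assoc]

end US17

namespace US17

lemma conjpow {G : Type*} [Group G] (g x : G) (k : ℕ) :
    (g⁻¹ * x * g)^k = g⁻¹ * x^k * g := by
  induction k with
  | zero => group
  | succ m ih => rw [pow_succ, pow_succ, ih]; group

lemma even_main {G : Type*} [Group G] (A B C : G) (v : ℕ)
    (hC : C = A * B * A⁻¹ * B⁻¹)
    (hrel : A * (C⁻¹)^v * B * C^v = 1) :
    B * (C^v * A * B⁻¹ * (A⁻¹ * (C⁻¹)^v * A)) * B⁻¹ = C^v * A * B⁻¹ * (A⁻¹ * (C⁻¹)^v * A) := by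
  have hB : B = C^v * A⁻¹ * (C⁻¹)^v := by
    calc B = C^v * A⁻¹ * (A * (C⁻¹)^v * B * C^v) * (C⁻¹)^v := by group
    _ = C^v * A⁻¹ * 1 * (C⁻¹)^v := by rw [hrel]
    _ = C^v * A⁻¹ * (C⁻¹)^v := by group
  rw [hB] at hC
  have h5 : C * C^v = A * (C^v * A⁻¹ * (C⁻¹)^v) * A⁻¹ * (C^v * A⁻¹ * (C⁻¹)^v)⁻¹ * C^v := by
    rw [← hC]
  have hY : A⁻¹ * C^v * A = C^v * (A * (C⁻¹)^v * A⁻¹) * (C * C^v) := by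
    rw [h5]; group
  rw [hB]
  calc (C^v * A⁻¹ * (C⁻¹)^v) * (C^v * A * (C^v * A⁻¹ * (C⁻¹)^v)⁻¹ * (A⁻¹ * (C⁻¹)^v * A)) * (C^v * A⁻¹ * (C⁻¹)^v)⁻¹
      = C^v * A * ((A⁻¹ * C^v * A) * (C⁻¹)^v * (A⁻¹ * C^v * A)⁻¹ * C^v) * A * (C⁻¹)^v := by group
    _ = C^v * A * ((C^v * (A * (C⁻¹)^v * A⁻¹) * (C * C^v)) * (C⁻¹)^v * (C^v * (A * (C⁻¹)^v * A⁻¹) * (C * C^v))⁻¹ * C^v) * A * (C⁻¹)^v := by rw [hY]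
    _ = C^v * A * (C^v * A⁻¹ * (C⁻¹)^v)⁻¹ * (A⁻¹ * (C⁻¹)^v * A) := by group

lemma odd_main {G : Type*} [Group G] (A B C : G) (v : ℕ)
    (hC : C = A * B * A⁻¹ * B⁻¹)
    (hrel : A * (C⁻¹)^(v+1) * B⁻¹ * C^v = 1) :
    B * (C^v * A * B * (A⁻¹ * (C⁻¹)^(v+1) * A)) * B⁻¹ = C^v * A * B * (A⁻¹ * (C⁻¹)^(v+1) * A) := by
  have hB : B = C^v * A * (C⁻¹)^(v+1) := by
    calc B = (C^(v+1) * A⁻¹ * (A * (C⁻¹)^(v+1) * B⁻¹ * C^v) * (C⁻¹)^v)⁻¹ := by group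
    _ = (C^(v+1) * A⁻¹ * 1 * (C⁻¹)^v)⁻¹ := by rw [hrel]
    _ = C^v * A * (C⁻¹)^(v+1) := by group
  rw [hB] at hC
  have h5 : C * C^v = A * (C^v * A * (C⁻¹)^(v+1)) * A⁻¹ * (C^v * A * (C⁻¹)^(v+1))⁻¹ * C^v := by
    rw [← hC]
  have hY : A⁻¹ * (C * C^v) * A = C^v * (A * (C⁻¹)^(v+1) * A⁻¹) * C^(v+1) := by
    rw [h5]; group
  rw [hB]
  have key : (C^v * A * (C⁻¹)^(v+1))⁻¹ * (C^v * A * (C^v * A * (C⁻¹)^(v+1)) * (A⁻¹ * (C⁻¹)^(v+1) * A)) * (C^v * A * (C⁻¹)^(v+1)) = C^v * A * (C^v * A * (C⁻¹)^(v+1)) * (A⁻¹ * (C⁻¹)^(v+1) * A) := by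
    calc (C^v * A * (C⁻¹)^(v+1))⁻¹ * (C^v * A * (C^v * A * (C⁻¹)^(v+1)) * (A⁻¹ * (C⁻¹)^(v+1) * A)) * (C^v * A * (C⁻¹)^(v+1))
        = C^v * A * ((A⁻¹ * (C * C^v) * A) * (C⁻¹)^(v+1) * (A⁻¹ * (C * C^v) * A)⁻¹ * C^v) * A * (C⁻¹)^(v+1) := by group
    _ = C^v * A * ((C^v * (A * (C⁻¹)^(v+1) * A⁻¹) * C^(v+1)) * (C⁻¹)^(v+1) * (C^v * (A * (C⁻¹)^(v+1) * A⁻¹) * C^(v+1))⁻¹ * C^v) * A * (C⁻¹)^(v+1) := by rw [hY]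
    _ = C^v * A * (C^v * A * (C⁻¹)^(v+1)) * (A⁻¹ * (C⁻¹)^(v+1) * A) := by group
  conv_lhs => rw [← key]
  group

end US17

open US17

/-- for `r = n/(2n+1)` with `n ≥ 2`, in `G = ⟨a, b | u_r⟩` the element
`u_s` with `s = (n+1)/(2n+1)` commutes with the meridian generator `b`. -/
theorem us_commutes_with_meridian (n : ℕ) (hn : 2 ≤ n) :
    ∀ (b us : PresentedGroup ({uElt (2 * n + 1) n} : Set (FreeGroup Bool))),
      b = PresentedGroup.of false →
      us = PresentedGroup.mk _ (uElt (2 * n + 1) (n + 1)) →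
      b * us * b⁻¹ = us := by
  intro b us hb hus
  subst hb hus
  set G := PresentedGroup ({uElt (2 * n + 1) n} : Set (FreeGroup Bool)) with hG
  set π := PresentedGroup.mk ({uElt (2 * n + 1) n} : Set (FreeGroup Bool)) with hπ
  have hone : π (uElt (2*n+1) n) = 1 := by
    apply (QuotientGroup.eq_one_iff _).mpr
    exact Subgroup.subset_normalClosure rfl
  set A : G := PresentedGroup.of true with hA
  set B : G := PresentedGroup.of false with hB
  have hπa : π ga = A := rfl
  have hπb : π gb = B := rfl
  have h4 : π (ga * (gc⁻¹)^((n+1)/2) * bbw n * gc^(n/2)) = 1 :=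
    (congrArg π (ur_closed n hn)).symm.trans hone
  have h2 : A * ((A*B*A⁻¹*B⁻¹)⁻¹)^((n+1)/2) * (π (bbw n)) * (A*B*A⁻¹*B⁻¹)^(n/2) = 1 := by
    simpa only [gc, map_mul, map_inv, map_pow, hπa, hπb] using h4
  have h3 : π (uElt (2*n+1) (n+1))
      = (A*B*A⁻¹*B⁻¹)^(n/2) * A * (π (bbw n))⁻¹ * (A⁻¹ * (((A*B*A⁻¹*B⁻¹))⁻¹)^((n+1)/2) * A) := by
    have h5 := congrArg π (us_closed n hn)
    simp only [gc, gd, map_mul, map_inv, map_pow, hπa, hπb] at h5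
    rw [show (A⁻¹*B*A*B⁻¹ : G) = A⁻¹ * (A*B*A⁻¹*B⁻¹)⁻¹ * A from by group, conjpow] at h5
    exact h5
  by_cases hp : n % 2 = 0
  · -- even case
    have hv : (n+1)/2 = n/2 := by omega
    have hbb : π (bbw n) = B := by rw [bbw, if_pos hp]; exact hπb
    rw [hv, hbb] at h2 h3
    rw [h3]
    exact even_main A B (A*B*A⁻¹*B⁻¹) (n/2) rfl h2
  · -- odd case
    have hv : (n+1)/2 = n/2 + 1 := by omega
    have hbb : π (bbw n) = B⁻¹ := by rw [bbw, if_neg hp, map_inv]; rw [hπb]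
    rw [hv, hbb] at h2 h3
    rw [inv_inv] at h3
    rw [h3]
    exact odd_main A B (A*B*A⁻¹*B⁻¹) (n/2) rfl h2
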